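/- Let m ≥ 1 and let (T_p)_{p ∈ ℤ} be a family of finite-dimensional complex vector spaces equipped with linear maps f : T_p → T_{p+m}, Δ : T_{p+m} → T_p, and θ : T_p → T_p for all p, such that (θ - p) is nilpotent on T_p, and on each T_p one has fΔ = ∏_{j=0}^{m-1}(θ/m + 2j) and Δf = ∏_{j=0}^{m-1}(θ/m + 2j + 1) (as endomorphisms of the appropriate spaces). Then for every integer p not divisible by m, the maps f : T_p → T_{p+m} and Δ : T_{p+m} → T_p are bijective. -/

import Mathlib

lemma aux_unit_factor {M : Type*} [AddCommGroup M] [Module ℂ M]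
    (m : ℕ) (hm : 1 ≤ m) (p : ℤ) (hp : ¬ ((m : ℤ) ∣ p))
    (θ : Module.End ℂ M)
    (hnil : IsNilpotent (θ - (p : ℂ) • (1 : Module.End ℂ M)))
    (c : ℕ) :
    IsUnit ((m : ℂ)⁻¹ • θ + (c : ℂ) • (1 : Module.End ℂ M)) := by
  have hm0 : (m : ℂ) ≠ 0 := by
    exact_mod_cast Nat.cast_ne_zero.mpr (by omega)
  set s : ℂ := (m : ℂ)⁻¹ * (p : ℂ) + (c : ℂ) with hs
  have hs0 : s ≠ 0 := by
    intro h
    apply hp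
    have : (p : ℂ) = ((-(c : ℤ) * m : ℤ) : ℂ) := by
      push_cast
      rw [hs] at h
      linear_combination (m : ℂ) * h - (p : ℂ) * mul_inv_cancel₀ hm0
    have hpz : p = -(c : ℤ) * m := by exact_mod_cast this
    exact ⟨-(c : ℤ), by rw [hpz]; ring⟩
  have key : (m : ℂ)⁻¹ • θ + (c : ℂ) • (1 : Module.End ℂ M)
      = (m : ℂ)⁻¹ • (θ - (p : ℂ) • 1) + s • 1 := by
    rw [hs]
    rw [smul_sub]
    module
  rw [key]
  refine IsNilpotent.isUnit_add_right_of_commute (hnil.smul _) ?_ ?_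
  · rw [← Algebra.algebraMap_eq_smul_one]
    exact (isUnit_iff_ne_zero.mpr hs0).map (algebraMap ℂ (Module.End ℂ M))
  · exact (Commute.one_right _).smul_left _ |>.smul_right _

theorem stmt_9 (m : ℕ) (hm : 1 ≤ m)
    (T : ℤ → Type*) [∀ p, AddCommGroup (T p)] [∀ p, Module ℂ (T p)]
    [∀ p, FiniteDimensional ℂ (T p)]
    (f : ∀ p : ℤ, T p →ₗ[ℂ] T (p + m))
    (Δ : ∀ p : ℤ, T (p + m) →ₗ[ℂ] T p)
    (θ : ∀ p : ℤ, Module.End ℂ (T p))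
    (hnil : ∀ p : ℤ, IsNilpotent (θ p - (p : ℂ) • (1 : Module.End ℂ (T p))))
    (hfΔ : ∀ p : ℤ, (f p ∘ₗ Δ p : Module.End ℂ (T (p + m))) =
      ((List.range m).map
        (fun j => (m : ℂ)⁻¹ • θ (p + m) + ((2 * j : ℕ) : ℂ) • 1)).prod)
    (hΔf : ∀ p : ℤ, (Δ p ∘ₗ f p : Module.End ℂ (T p)) =
      ((List.range m).map
        (fun j => (m : ℂ)⁻¹ • θ p + ((2 * j + 1 : ℕ) : ℂ) • 1)).prod) :
    ∀ p : ℤ, ¬ ((m : ℤ) ∣ p) →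
      Function.Bijective (f p) ∧ Function.Bijective (Δ p) := by
  intro p hp
  have hp' : ¬ ((m : ℤ) ∣ (p + m)) := by
    intro ⟨k, hk⟩; exact hp ⟨k - 1, by linarith⟩
  have h1 : IsUnit (f p ∘ₗ Δ p : Module.End ℂ (T (p + m))) := by
    rw [hfΔ p]
    refine List.prod_isUnit ?_
    intro x hx
    obtain ⟨j, _, rfl⟩ := List.mem_map.mp hx
    exact aux_unit_factor m hm (p + m) (by exact_mod_cast hp') _ (hnil _) _
  have h2 : IsUnit (Δ p ∘ₗ f p : Module.End ℂ (T p)) := by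
    rw [hΔf p]
    refine List.prod_isUnit ?_
    intro x hx
    obtain ⟨j, _, rfl⟩ := List.mem_map.mp hx
    exact aux_unit_factor m hm p hp _ (hnil _) _
  have b1 := (Module.End.isUnit_iff _).mp h1
  have b2 := (Module.End.isUnit_iff _).mp h2
  constructor
  · exact ⟨Function.Injective.of_comp (f := ⇑(Δ p)) b2.injective,
      Function.Surjective.of_comp (g := ⇑(Δ p)) b1.surjective⟩
  · exact ⟨Function.Injective.of_comp (f := ⇑(f p)) b1.injective,
      Function.Surjective.of_comp (g := ⇑(f p)) b2.surjective⟩
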